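/- For the flower state ρ^{AA'BB'} with purification (1/√(2d)) Σ_{i,j} |i⟩^A|j⟩^{A'}|i⟩^B|j⟩^{B'}U_j|i⟩^C, and any CPTP map Λ: C → E with resulting extension ρ^{AA'BB'E}, the entropies satisfy S(ρ^{AA'E}) = S(ρ^{BB'E}) = 1 + S(τ) + S(Λ(τ)) − (1/2)χ(Λ(E₀)) − (1/2)χ(Λ(E₁)), S(ρ^E) = S(Λ(τ)), and S(ρ^{AA'BB'E}) = S((id ⊗ Λ)Φ_d), where τ = I/d. -/

import Mathlib

open scoped Matrix Kronecker BigOperators ComplexOrder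
open Matrix

noncomputable section

/-- `x ↦ -x log₂ x` (with value `0` at `0`). -/
def nlog (x : ℝ) : ℝ := -(x * Real.logb 2 x)

/-- A density matrix: positive semidefinite with unit trace. -/
def IsDensity {n : Type*} [Fintype n] (ρ : Matrix n n ℂ) : Prop :=
  ρ.PosSemidef ∧ ρ.trace = 1

/-- Von Neumann entropy (in bits) of a Hermitian matrix, via its eigenvalues. -/
def vnEntropy {n : Type*} [Fintype n] [DecidableEq n] (ρ : Matrix n n ℂ) : ℝ :=
  if h : ρ.IsHermitian then ∑ i, nlog (h.eigenvalues i) else 0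

variable {A B C E : Type*}

/-- Partial trace over the second (right) tensor factor. -/
def ptraceR [Fintype A] [Fintype B] (ρ : Matrix (A × B) (A × B) ℂ) : Matrix A A ℂ :=
  Matrix.of fun a a' => ∑ b, ρ (a, b) (a', b)

/-- Partial trace over the first (left) tensor factor. -/
def ptraceL [Fintype A] [Fintype B] (ρ : Matrix (A × B) (A × B) ℂ) : Matrix B B ℂ :=
  Matrix.of fun b b' => ∑ a, ρ (a, b) (a, b')

/-- Marginal on `A × E` of a state on `(A × B) × E`. -/
def margAE [Fintype A] [Fintype B] [Fintype E]
    (ρ : Matrix ((A × B) × E) ((A × B) × E) ℂ) : Matrix (A × E) (A × E) ℂ :=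
  Matrix.of fun x y => ∑ b, ρ ((x.1, b), x.2) ((y.1, b), y.2)

/-- Marginal on `B × E` of a state on `(A × B) × E`. -/
def margBE [Fintype A] [Fintype B] [Fintype E]
    (ρ : Matrix ((A × B) × E) ((A × B) × E) ℂ) : Matrix (B × E) (B × E) ℂ :=
  Matrix.of fun x y => ∑ a, ρ ((a, x.1), x.2) ((a, y.1), y.2)

/-- Marginals of a tripartite state on `A × B × C` (right associated). -/
def marg1 [Fintype A] [Fintype B] [Fintype C]
    (ρ : Matrix (A × B × C) (A × B × C) ℂ) : Matrix A A ℂ :=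
  Matrix.of fun a a' => ∑ b, ∑ c, ρ (a, b, c) (a', b, c)

def marg2 [Fintype A] [Fintype B] [Fintype C]
    (ρ : Matrix (A × B × C) (A × B × C) ℂ) : Matrix B B ℂ :=
  Matrix.of fun b b' => ∑ a, ∑ c, ρ (a, b, c) (a, b', c)

def marg3 [Fintype A] [Fintype B] [Fintype C]
    (ρ : Matrix (A × B × C) (A × B × C) ℂ) : Matrix C C ℂ :=
  Matrix.of fun c c' => ∑ a, ∑ b, ρ (a, b, c) (a, b, c')

def marg12 [Fintype A] [Fintype B] [Fintype C]
    (ρ : Matrix (A × B × C) (A × B × C) ℂ) : Matrix (A × B) (A × B) ℂ :=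
  Matrix.of fun x y => ∑ c, ρ (x.1, x.2, c) (y.1, y.2, c)

def marg13 [Fintype A] [Fintype B] [Fintype C]
    (ρ : Matrix (A × B × C) (A × B × C) ℂ) : Matrix (A × C) (A × C) ℂ :=
  Matrix.of fun x y => ∑ b, ρ (x.1, b, x.2) (y.1, b, y.2)

def marg23 [Fintype A] [Fintype B] [Fintype C]
    (ρ : Matrix (A × B × C) (A × B × C) ℂ) : Matrix (B × C) (B × C) ℂ :=
  Matrix.of fun x y => ∑ a, ρ (a, x.1, x.2) (a, y.1, y.2)

/-- Quantum mutual information `I(A;B) = S(A) + S(B) - S(AB)` of a bipartite state. -/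
def mutualInfo [Fintype A] [Fintype B] [DecidableEq A] [DecidableEq B]
    (ρ : Matrix (A × B) (A × B) ℂ) : ℝ :=
  vnEntropy (ptraceR ρ) + vnEntropy (ptraceL ρ) - vnEntropy ρ

/-- Conditional mutual information `I(A;B|E) = S(AE) + S(BE) - S(E) - S(ABE)`. -/
def condMI [Fintype A] [Fintype B] [Fintype E] [DecidableEq A] [DecidableEq B] [DecidableEq E]
    (ρ : Matrix ((A × B) × E) ((A × B) × E) ℂ) : ℝ :=
  vnEntropy (margAE ρ) + vnEntropy (margBE ρ) - vnEntropy (ptraceL ρ) - vnEntropy ρ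

/-- An extension of a bipartite state `ρ^{AB}` by a finite-dimensional system `E`. -/
structure Extension {A B : Type*} [Fintype A] [Fintype B]
    (ρ : Matrix (A × B) (A × B) ℂ) where
  e : ℕ
  σ : Matrix ((A × B) × Fin e) ((A × B) × Fin e) ℂ
  density : IsDensity σ
  marg : ptraceR σ = ρ

/-- Entanglement of purification: `E_P(ρ) = inf { S(AE) : extensions ρ^{ABE} }`. -/
def EP [Fintype A] [Fintype B] [DecidableEq A]
    (ρ : Matrix (A × B) (A × B) ℂ) : ℝ :=
  ⨅ ext : Extension ρ, vnEntropy (margAE ext.σ)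

/-- Squashed entanglement: `E_sq(ρ) = inf { ½ I(A;B|E) : extensions ρ^{ABE} }`. -/
def Esq [Fintype A] [Fintype B] [DecidableEq A] [DecidableEq B]
    (ρ : Matrix (A × B) (A × B) ℂ) : ℝ :=
  ⨅ ext : Extension ρ, (1 / 2 : ℝ) * condMI ext.σ

/-- A completely positive trace-preserving map, given on matrices. -/
structure CPTPMap (A B : Type*) [Fintype A] [DecidableEq A] [Fintype B] [DecidableEq B] where
  toFun : Matrix A A ℂ → Matrix B B ℂ
  lin : IsLinearMap ℂ toFun
  tp : ∀ ρ, (toFun ρ).trace = ρ.trace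
  cp : ∀ (n : ℕ) (ρ : Matrix (Fin n × A) (Fin n × A) ℂ), ρ.PosSemidef →
      (Matrix.of fun (x y : Fin n × B) =>
        toFun (Matrix.of fun a a' => ρ (x.1, a) (y.1, a')) x.2 y.2).PosSemidef

/-- The map `id_E ⊗ Λ` applied entrywise on blocks. -/
def idTensor {A B : Type*} [Fintype A] [DecidableEq A] [Fintype B] [DecidableEq B]
    {E : Type*} (Λ : CPTPMap A B) (ρ : Matrix (E × A) (E × A) ℂ) :
    Matrix (E × B) (E × B) ℂ :=
  Matrix.of fun x y => Λ.toFun (Matrix.of fun a a' => ρ (x.1, a) (y.1, a')) x.2 y.2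

/-- The rank-one projector `|v⟩⟨v|`. -/
def ketbra {n : Type*} (v : n → ℂ) : Matrix n n ℂ :=
  Matrix.of fun a b => v a * star (v b)

/-- Computational basis vector. -/
def basisVec {n : Type*} [DecidableEq n] (i : n) : n → ℂ :=
  fun a => if a = i then 1 else 0

/-- The discrete Fourier transform matrix of `ℤ_d`. -/
def fourierMat (d : ℕ) : Matrix (Fin d) (Fin d) ℂ :=
  Matrix.of fun j k =>
    Complex.exp (2 * (Real.pi : ℂ) * Complex.I * ((j : ℕ) : ℂ) * ((k : ℕ) : ℂ) / (d : ℂ)) /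
      ((Real.sqrt d : ℝ) : ℂ)

/-- The maximally mixed state `τ = 𝟙/dim`. -/
def mmix (n : Type*) [Fintype n] [DecidableEq n] : Matrix n n ℂ :=
  ((Fintype.card n : ℂ))⁻¹ • (1 : Matrix n n ℂ)

/-- The maximally entangled state `Φ = |Φ⟩⟨Φ|`, `|Φ⟩ = (1/√dim) Σᵢ |i⟩|i⟩`. -/
def maxEnt (n : Type*) [Fintype n] [DecidableEq n] : Matrix (n × n) (n × n) ℂ :=
  Matrix.of fun x y =>
    if x.1 = x.2 ∧ y.1 = y.2 then ((Fintype.card n : ℂ))⁻¹ else 0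

/-- Holevo information of a uniform ensemble `{(1/|ι|, σ_i)}`. -/
def holevoUnif {ι n : Type*} [Fintype ι] [Fintype n] [DecidableEq n]
    (σ : ι → Matrix n n ℂ) : ℝ :=
  vnEntropy (((Fintype.card ι : ℂ))⁻¹ • ∑ i, σ i) -
    ((Fintype.card ι : ℝ))⁻¹ * ∑ i, vnEntropy (σ i)

/-- Quantum mutual information `I(τ;Λ) = S(τ) + S(Λ(τ)) - S((id ⊗ Λ)Φ)` of a channel
relative to the maximally mixed state. -/
def chanMI {n m : Type*} [Fintype n] [DecidableEq n] [Fintype m] [DecidableEq m]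
    (Λ : CPTPMap n m) : ℝ :=
  Real.logb 2 (Fintype.card n) + vnEntropy (Λ.toFun (mmix n)) -
    vnEntropy (idTensor Λ (maxEnt n))

/-- The swap (flip) operator on `ℂ^d ⊗ ℂ^d`. -/
def swapMat (d : ℕ) : Matrix (Fin d × Fin d) (Fin d × Fin d) ℂ :=
  Matrix.of fun x y => if x.1 = y.2 ∧ x.2 = y.1 then 1 else 0

/-- Projector onto the symmetric subspace. -/
def Psym (d : ℕ) : Matrix (Fin d × Fin d) (Fin d × Fin d) ℂ :=
  ((1 : ℂ) / 2) • ((1 : Matrix (Fin d × Fin d) (Fin d × Fin d) ℂ) + swapMat d)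

/-- Projector onto the antisymmetric subspace. -/
def Panti (d : ℕ) : Matrix (Fin d × Fin d) (Fin d × Fin d) ℂ :=
  ((1 : ℂ) / 2) • ((1 : Matrix (Fin d × Fin d) (Fin d × Fin d) ℂ) - swapMat d)

/-- The discrete Weyl shift operator `X|j⟩ = |j+1⟩`. -/
def weylX (d : ℕ) : Matrix (Fin d) (Fin d) ℂ :=
  Matrix.of fun j k => if (j : ℕ) = ((k : ℕ) + 1) % d then 1 else 0

/-- The discrete Weyl phase operator `Z|j⟩ = e^{2πij/d}|j⟩`. -/
def weylZ (d : ℕ) : Matrix (Fin d) (Fin d) ℂ :=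
  Matrix.diagonal fun j =>
    Complex.exp (2 * (Real.pi : ℂ) * Complex.I * ((j : ℕ) : ℂ) / (d : ℂ))

/-- Matrix logarithm (base 2) of a Hermitian matrix via functional calculus. -/
def matLog {n : Type*} [Fintype n] [DecidableEq n] (ρ : Matrix n n ℂ) : Matrix n n ℂ :=
  if h : ρ.IsHermitian then
    (h.eigenvectorUnitary : Matrix n n ℂ) *
      Matrix.diagonal (fun i => ((Real.logb 2 (h.eigenvalues i) : ℝ) : ℂ)) *
      (star h.eigenvectorUnitary : Matrix n n ℂ)
  else 0

/-- Quantum relative entropy `D(σ‖ω) = Tr σ (log σ - log ω)` (base 2). -/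
def relEnt {n : Type*} [Fintype n] [DecidableEq n] (σ ω : Matrix n n ℂ) : ℝ :=
  ((σ * (matLog σ - matLog ω)).trace).re

/-- The purifying vector of the flower state:
`|Ψ⟩ = (1/√(2d)) Σ_{i,j} |i⟩^A|j⟩^{A'}|i⟩^B|j⟩^{B'} U_j|i⟩^C`,
with systems grouped as `((A × A') × (B × B')) × C`. -/
def flowerKet (d : ℕ) : ((Fin d × Fin 2) × (Fin d × Fin 2)) × Fin d → ℂ :=
  fun u =>
    ((Real.sqrt (2 * d) : ℝ) : ℂ)⁻¹ *
      (if u.1.1.1 = u.1.2.1 ∧ u.1.1.2 = u.1.2.2 then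
        (if u.1.1.2 = 0 then (1 : Matrix (Fin d) (Fin d) ℂ) else fourierMat d) u.2 u.1.1.1
      else 0)

/-- The pure flower state `|Ψ⟩⟨Ψ|` on `AA'BB'C`. -/
def flowerPure (d : ℕ) :
    Matrix (((Fin d × Fin 2) × (Fin d × Fin 2)) × Fin d)
      (((Fin d × Fin 2) × (Fin d × Fin 2)) × Fin d) ℂ :=
  ketbra (flowerKet d)

/-- The flower state `ρ^{AA'BB'} = Tr_C |Ψ⟩⟨Ψ|`. -/
def flowerRho (d : ℕ) :
    Matrix ((Fin d × Fin 2) × (Fin d × Fin 2)) ((Fin d × Fin 2) × (Fin d × Fin 2)) ℂ :=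
  ptraceR (flowerPure d)


section Foundation


lemma nlog_zero : nlog 0 = 0 := by simp [nlog]

lemma nlog_mul (a b : ℝ) : nlog (a * b) = b * nlog a + a * nlog b := by
  rcases eq_or_ne a 0 with rfl | ha
  · simp [nlog]
  rcases eq_or_ne b 0 with rfl | hb
  · simp [nlog]
  unfold nlog
  rw [Real.logb, Real.logb, Real.logb, Real.log_mul ha hb]
  ring

lemma evalCharpoly {n : Type*} [Fintype n] [DecidableEq n] (M : Matrix n n ℂ) (t : ℂ) :
    (M.charpoly).eval t = (t • (1 : Matrix n n ℂ) - M).det := by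
  have h1 : (M.charpoly).eval t = ((charmatrix M).map (Polynomial.evalRingHom t)).det := by
    rw [Matrix.charpoly]
    rw [show Polynomial.eval t (charmatrix M).det
        = (Polynomial.evalRingHom t) (charmatrix M).det from rfl, RingHom.map_det]
    rw [RingHom.mapMatrix_apply]
  rw [h1]
  congr 1
  ext i j
  by_cases h : i = j
  · subst h
    simp [Matrix.one_apply]
  · simp [Matrix.charmatrix_apply_ne _ _ _ h, Matrix.one_apply_ne h, h]

lemma charpoly_conj_diag {n : Type*} [Fintype n] [DecidableEq n]
    (U : Matrix n n ℂ) (hU : U * star U = 1) (v : n → ℝ) :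
    (U * Matrix.diagonal (fun i => ((v i : ℝ) : ℂ)) * star U).charpoly
      = ∏ i : n, (Polynomial.X - Polynomial.C ((v i : ℝ) : ℂ)) := by
  apply Polynomial.funext
  intro t
  rw [evalCharpoly, Polynomial.eval_prod]
  have hdiag : Matrix.diagonal (fun i => t - ((v i : ℝ) : ℂ))
      = t • (1 : Matrix n n ℂ) - Matrix.diagonal (fun i => ((v i : ℝ) : ℂ)) := by
    ext i j
    by_cases h : i = j
    · subst h; simp
    · simp [Matrix.one_apply_ne h, Matrix.diagonal_apply_ne _ h, h]
  have h1 : t • (1 : Matrix n n ℂ) - U * Matrix.diagonal (fun i => ((v i : ℝ) : ℂ)) * star U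
      = U * (Matrix.diagonal (fun i => t - ((v i : ℝ) : ℂ))) * star U := by
    rw [hdiag, Matrix.mul_sub, Matrix.sub_mul, Matrix.mul_smul, Matrix.smul_mul, Matrix.mul_one,
      hU]
  rw [h1, Matrix.det_mul, Matrix.det_mul, mul_right_comm, ← Matrix.det_mul, hU]
  simp [Matrix.det_diagonal]

lemma charpoly_isometry {m n : Type*} [Fintype m] [DecidableEq m] [Fintype n] [DecidableEq n]
    (V : Matrix m n ℂ) (hV : Vᴴ * V = 1) (N : Matrix n n ℂ)
    (hc : Fintype.card n ≤ Fintype.card m) :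
    (V * N * Vᴴ).charpoly = Polynomial.X ^ (Fintype.card m - Fintype.card n) * N.charpoly := by
  have key : ∀ t : ℂ, t ≠ 0 →
      ((V * N * Vᴴ).charpoly).eval t
        = (Polynomial.X ^ (Fintype.card m - Fintype.card n) * N.charpoly).eval t := by
    intro t ht
    rw [Polynomial.eval_mul, Polynomial.eval_pow, Polynomial.eval_X, evalCharpoly, evalCharpoly]
    have h1 : t • (1 : Matrix m m ℂ) - V * N * Vᴴ
        = t • ((1 : Matrix m m ℂ) + V * ((-t⁻¹) • N) * Vᴴ) := by
      rw [smul_add, Matrix.mul_smul, Matrix.smul_mul, smul_smul, mul_neg, mul_inv_cancel₀ ht]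
      simp [sub_eq_add_neg]
    have h2 : t • (1 : Matrix n n ℂ) - N = t • ((1 : Matrix n n ℂ) + (-t⁻¹) • N) := by
      rw [smul_add, smul_smul, mul_neg, mul_inv_cancel₀ ht]
      simp [sub_eq_add_neg]
    rw [h1, h2, Matrix.det_smul, Matrix.det_smul]
    have h3 : V * ((-t⁻¹) • N) * Vᴴ = (V * ((-t⁻¹) • N)) * Vᴴ := by rw [Matrix.mul_assoc]
    rw [h3, Matrix.det_one_add_mul_comm, ← Matrix.mul_assoc, hV, Matrix.one_mul]
    rw [← pow_sub_mul_pow t hc]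
    ring
  have hsub : (V * N * Vᴴ).charpoly
      - Polynomial.X ^ (Fintype.card m - Fintype.card n) * N.charpoly = 0 := by
    apply Polynomial.eq_zero_of_infinite_isRoot
    have hinf : ({x : ℂ | x ≠ 0}).Infinite := by
      have h0 : {x : ℂ | x ≠ 0} = ({0} : Set ℂ)ᶜ := by ext x; simp
      rw [h0]; exact (Set.finite_singleton 0).infinite_compl
    apply hinf.mono
    intro x hx
    simp only [Set.mem_setOf_eq, Polynomial.IsRoot, Polynomial.eval_sub, sub_eq_zero]
    exact key x hx
  have := sub_eq_zero.mp hsub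
  exact this

end Foundation
section Spectral

/-- Block-diagonal matrix with block index first. -/
def blockMat {k E : Type*} [DecidableEq k] (A : k → Matrix E E ℂ) :
    Matrix (k × E) (k × E) ℂ :=
  Matrix.of fun x y => if x.1 = y.1 then A x.1 x.2 y.2 else 0

lemma blockMat_isHermitian {k E : Type*} [Fintype k] [DecidableEq k] [Fintype E]
    {A : k → Matrix E E ℂ} (hA : ∀ j, (A j).IsHermitian) : (blockMat A).IsHermitian := by
  unfold Matrix.IsHermitian
  ext x y
  rw [Matrix.conjTranspose_apply]
  show star (blockMat A y x) = blockMat A x y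
  by_cases h : x.1 = y.1
  · have h' : y.1 = x.1 := h.symm
    simp only [blockMat, Matrix.of_apply, if_pos h, if_pos h']
    rw [h]
    rw [← Matrix.conjTranspose_apply, (hA y.1).eq]
  · simp only [blockMat, Matrix.of_apply, if_neg h,
      if_neg (fun hh : y.1 = x.1 => h hh.symm), star_zero]

lemma blockMat_charpoly {k E : Type*} [Fintype k] [DecidableEq k] [Fintype E] [DecidableEq E]
    (A : k → Matrix E E ℂ) : (blockMat A).charpoly = ∏ j, (A j).charpoly := by
  have h : blockMat A = Matrix.reindex (Equiv.prodComm E k) (Equiv.prodComm E k)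
      (Matrix.blockDiagonal A) := by
    ext x y
    simp [blockMat, Matrix.blockDiagonal_apply, Matrix.reindex_apply, Equiv.prodComm]
  rw [h, Matrix.charpoly_reindex]
  apply Polynomial.funext
  intro t
  rw [evalCharpoly, Polynomial.eval_prod]
  have h2 : t • (1 : Matrix (E × k) (E × k) ℂ) - Matrix.blockDiagonal A
      = Matrix.blockDiagonal (fun j => t • (1 : Matrix E E ℂ) - A j) := by
    ext x y
    rcases x with ⟨e, j⟩; rcases y with ⟨e', j'⟩
    by_cases hj : j = j'
    · subst hj
      by_cases he : e = e' <;>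
        simp [Matrix.blockDiagonal_apply, Matrix.one_apply, he]
    · simp [Matrix.blockDiagonal_apply, Matrix.one_apply, hj, Prod.ext_iff]
  rw [h2, Matrix.det_blockDiagonal]
  exact Finset.prod_congr rfl fun j _ => (evalCharpoly (A j) t).symm

lemma spectral_ofReal {n : Type*} [Fintype n] [DecidableEq n] {ρ : Matrix n n ℂ}
    (h : ρ.IsHermitian) :
    ρ = (h.eigenvectorUnitary : Matrix n n ℂ)
      * Matrix.diagonal (fun i => ((h.eigenvalues i : ℝ) : ℂ))
      * star (h.eigenvectorUnitary : Matrix n n ℂ) := by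
  have hf : (RCLike.ofReal ∘ h.eigenvalues : n → ℂ)
      = fun i => ((h.eigenvalues i : ℝ) : ℂ) := by
    funext i; rfl
  conv_lhs => rw [h.spectral_theorem]
  rw [hf, Unitary.conjStarAlgAut_apply]

lemma hermitian_charpoly_eigen {n : Type*} [Fintype n] [DecidableEq n] {ρ : Matrix n n ℂ}
    (h : ρ.IsHermitian) :
    ρ.charpoly = ∏ i, (Polynomial.X - Polynomial.C ((h.eigenvalues i : ℝ) : ℂ)) := by
  have hU : (h.eigenvectorUnitary : Matrix n n ℂ)
      * star (h.eigenvectorUnitary : Matrix n n ℂ) = 1 :=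
    (Matrix.mem_unitaryGroup_iff).mp h.eigenvectorUnitary.2
  conv_lhs => rw [spectral_ofReal h]
  exact charpoly_conj_diag _ hU _

lemma sumNlog {κ : Type*} [Fintype κ] (w : κ → ℝ) :
    ∑ i, nlog (w i)
      = ((Finset.univ.val.map fun i => ((w i : ℝ) : ℂ)).map fun z => nlog z.re).sum := by
  rw [Multiset.map_map, Finset.sum_eq_multiset_sum]
  congr 1

lemma prodXsubC_eq {κ : Type*} [Fintype κ] (w : κ → ℝ) :
    (∏ i : κ, (Polynomial.X - Polynomial.C ((w i : ℝ) : ℂ)))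
      = ((Finset.univ.val.map fun i : κ => ((w i : ℝ) : ℂ)).map
          fun a => Polynomial.X - Polynomial.C a).prod := by
  rw [Multiset.map_map, Finset.prod_eq_multiset_prod]
  congr 1

lemma vnEntropy_eq_sum {n ι : Type*} [Fintype n] [DecidableEq n] [Fintype ι]
    {ρ : Matrix n n ℂ} (h : ρ.IsHermitian) (v : ι → ℝ)
    (hcp : ρ.charpoly = ∏ i : ι, (Polynomial.X - Polynomial.C ((v i : ℝ) : ℂ))) :
    vnEntropy ρ = ∑ i, nlog (v i) := by
  have e1 := hermitian_charpoly_eigen h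
  rw [hcp] at e1
  have k1 := prodXsubC_eq (κ := ι) v
  have k2 := prodXsubC_eq (κ := n) h.eigenvalues
  have e2 := k1.symm.trans (e1.trans k2)
  have r1 := congrArg Polynomial.roots e2.symm
  rw [Polynomial.roots_multiset_prod_X_sub_C, Polynomial.roots_multiset_prod_X_sub_C] at r1
  calc vnEntropy ρ = ∑ i, nlog (h.eigenvalues i) := by rw [vnEntropy, dif_pos h]
    _ = ((Finset.univ.val.map fun i => ((h.eigenvalues i : ℝ) : ℂ)).map
          fun z => nlog z.re).sum := sumNlog _
    _ = ((Finset.univ.val.map fun i : ι => ((v i : ℝ) : ℂ)).map fun z => nlog z.re).sum := by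
        rw [r1]
    _ = ∑ i, nlog (v i) := (sumNlog _).symm

lemma sum_eigenvalues_eq_trace {n : Type*} [Fintype n] [DecidableEq n] {ρ : Matrix n n ℂ}
    (h : ρ.IsHermitian) : ∑ i, h.eigenvalues i = (ρ.trace).re := by
  have hU : star (h.eigenvectorUnitary : Matrix n n ℂ)
      * (h.eigenvectorUnitary : Matrix n n ℂ) = 1 :=
    (Matrix.mem_unitaryGroup_iff').mp h.eigenvectorUnitary.2
  have htr := congrArg Matrix.trace (spectral_ofReal h)
  rw [Matrix.trace_mul_cycle, hU, Matrix.one_mul, Matrix.trace_diagonal] at htr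
  have := congrArg Complex.re htr
  rw [Complex.re_sum] at this
  simp only [Complex.ofReal_re] at this
  exact this.symm

lemma vnEntropy_smul {n : Type*} [Fintype n] [DecidableEq n] {ρ : Matrix n n ℂ}
    (h : ρ.IsHermitian) (c : ℝ) :
    vnEntropy ((c : ℂ) • ρ) = c * vnEntropy ρ + nlog c * (ρ.trace).re := by
  have hU : (h.eigenvectorUnitary : Matrix n n ℂ)
      * star (h.eigenvectorUnitary : Matrix n n ℂ) = 1 :=
    (Matrix.mem_unitaryGroup_iff).mp h.eigenvectorUnitary.2
  have hd2 : Matrix.diagonal (fun i => ((c * h.eigenvalues i : ℝ) : ℂ))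
      = (c : ℂ) • Matrix.diagonal (fun i => ((h.eigenvalues i : ℝ) : ℂ)) := by
    ext i j
    by_cases hij : i = j
    · subst hij
      simp [Matrix.smul_apply]
    · simp [Matrix.diagonal_apply_ne _ hij, hij]
  have hsp : (c : ℂ) • ρ = (h.eigenvectorUnitary : Matrix n n ℂ)
      * Matrix.diagonal (fun i => ((c * h.eigenvalues i : ℝ) : ℂ))
      * star (h.eigenvectorUnitary : Matrix n n ℂ) := by
    rw [hd2, Matrix.mul_smul, Matrix.smul_mul]
    exact congrArg _ (spectral_ofReal h)
  have hherm : ((c : ℂ) • ρ).IsHermitian := by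
    unfold Matrix.IsHermitian
    rw [Matrix.conjTranspose_smul, Complex.star_def, Complex.conj_ofReal, h.eq]
  have hcp : ((c : ℂ) • ρ).charpoly
      = ∏ i : n, (Polynomial.X - Polynomial.C ((c * h.eigenvalues i : ℝ) : ℂ)) := by
    conv_lhs => rw [hsp]
    exact charpoly_conj_diag _ hU _
  rw [vnEntropy_eq_sum hherm _ hcp]
  have hn : ∀ i : n, nlog (c * h.eigenvalues i)
      = h.eigenvalues i * nlog c + c * nlog (h.eigenvalues i) := fun i => nlog_mul _ _
  rw [Finset.sum_congr rfl fun i _ => hn i, Finset.sum_add_distrib, ← Finset.sum_mul,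
    ← Finset.mul_sum, sum_eigenvalues_eq_trace h, vnEntropy, dif_pos h]
  ring

lemma vnEntropy_blockMat {k E : Type*} [Fintype k] [DecidableEq k] [Fintype E] [DecidableEq E]
    (A : k → Matrix E E ℂ) (hA : ∀ j, (A j).IsHermitian) :
    vnEntropy (blockMat A) = ∑ j, vnEntropy (A j) := by
  have hcp : (blockMat A).charpoly
      = ∏ x : k × E, (Polynomial.X - Polynomial.C (((hA x.1).eigenvalues x.2 : ℝ) : ℂ)) := by
    rw [blockMat_charpoly, Fintype.prod_prod_type]
    exact Finset.prod_congr rfl fun j _ => hermitian_charpoly_eigen (hA j)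
  rw [vnEntropy_eq_sum (blockMat_isHermitian hA) _ hcp, Fintype.sum_prod_type]
  exact Finset.sum_congr rfl fun j _ => by rw [vnEntropy, dif_pos (hA j)]

end Spectral
section PSD

lemma ketbra_eq_conj {n : Type*} [Fintype n] (v : n → ℂ) :
    ketbra v = (Matrix.of fun (_ : Unit) j => star (v j))ᴴ
      * (Matrix.of fun (_ : Unit) j => star (v j)) := by
  ext i j
  simp [ketbra, Matrix.mul_apply, Matrix.conjTranspose_apply]

lemma ketbra_posSemidef {n : Type*} [Fintype n] (v : n → ℂ) : (ketbra v).PosSemidef := by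
  rw [ketbra_eq_conj]
  exact Matrix.posSemidef_conjTranspose_mul_self _

lemma posSemidef_real_smul {n : Type*} [Fintype n] {M : Matrix n n ℂ} (hM : M.PosSemidef)
    {c : ℝ} (hc : 0 ≤ c) : ((c : ℂ) • M).PosSemidef := by
  refine ⟨?_, fun x => ?_⟩
  · unfold Matrix.IsHermitian
    rw [Matrix.conjTranspose_smul, Complex.star_def, Complex.conj_ofReal, hM.1.eq]
  · have e : (x.sum fun i xi => x.sum fun j xj => star xi * ((c : ℂ) • M) i j * xj)
        = (c : ℂ) * x.sum fun i xi => x.sum fun j xj => star xi * M i j * xj := by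
      simp only [Matrix.smul_apply, smul_eq_mul, Finsupp.sum, Finset.mul_sum]
      exact Finset.sum_congr rfl fun i _ => Finset.sum_congr rfl fun j _ => by ring
    rw [e]
    exact mul_nonneg (by exact_mod_cast hc) (hM.2 x)

lemma cptp_psd {A E : Type*} [Fintype A] [DecidableEq A] [Fintype E] [DecidableEq E]
    (Λ : CPTPMap A E) {ρ : Matrix A A ℂ} (hρ : ρ.PosSemidef) : (Λ.toFun ρ).PosSemidef := by
  have h1 : (ρ.submatrix (Prod.snd : Fin 1 × A → A) Prod.snd).PosSemidef := hρ.submatrix _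
  have h2 := Λ.cp 1 _ h1
  have h3 : Λ.toFun ρ = (Matrix.of fun (x y : Fin 1 × E) =>
      Λ.toFun (Matrix.of fun a a' =>
        (ρ.submatrix (Prod.snd : Fin 1 × A → A) Prod.snd) ((x.1, a)) ((y.1, a'))) x.2 y.2).submatrix
      (fun e => ((0 : Fin 1), e)) (fun e => ((0 : Fin 1), e)) := rfl
  rw [h3]
  exact h2.submatrix _

lemma idTensor_psd {A E G : Type*} [Fintype A] [DecidableEq A] [Fintype E] [DecidableEq E]
    [Fintype G] [DecidableEq G] (Λ : CPTPMap A E) {ρ : Matrix (G × A) (G × A) ℂ}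
    (hρ : ρ.PosSemidef) : (idTensor Λ ρ).PosSemidef := by
  set e := Fintype.equivFin G with he
  have h1 : (ρ.submatrix (Prod.map e.symm id) (Prod.map e.symm id)).PosSemidef := hρ.submatrix _
  have h2 := Λ.cp (Fintype.card G) _ h1
  have h3 : idTensor Λ ρ = (Matrix.of fun (x y : Fin (Fintype.card G) × E) =>
      Λ.toFun (Matrix.of fun a a' =>
        (ρ.submatrix (Prod.map e.symm id) (Prod.map e.symm id)) ((x.1, a)) ((y.1, a'))) x.2 y.2).submatrix
      (Prod.map e id) (Prod.map e id) := by
    ext x y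
    simp only [Matrix.submatrix_apply, Matrix.of_apply, idTensor, Prod.map, id]
    congr 1
    ext a a'
    simp
  rw [h3]
  exact h2.submatrix _

lemma maxEnt_psd (n : Type*) [Fintype n] [DecidableEq n] : (maxEnt n).PosSemidef := by
  have h : maxEnt n = ketbra (fun x : n × n =>
      if x.1 = x.2 then (((Real.sqrt (Fintype.card n))⁻¹ : ℝ) : ℂ) else 0) := by
    ext x y
    simp only [maxEnt, ketbra, Matrix.of_apply]
    by_cases hx : x.1 = x.2 <;> by_cases hy : y.1 = y.2 <;> simp [hx, hy]
    rw [← mul_inv, ← Complex.ofReal_mul, Real.mul_self_sqrt (Nat.cast_nonneg _)]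
    push_cast
    ring
  rw [h]
  exact ketbra_posSemidef _

end PSD
section Fourier

lemma fourier_symm (d : ℕ) (a b : Fin d) : fourierMat d a b = fourierMat d b a := by
  simp only [fourierMat, Matrix.of_apply]
  have h : 2 * (Real.pi : ℂ) * Complex.I * ((a : ℕ) : ℂ) * ((b : ℕ) : ℂ) / (d : ℂ)
      = 2 * (Real.pi : ℂ) * Complex.I * ((b : ℕ) : ℂ) * ((a : ℕ) : ℂ) / (d : ℂ) := by ring
  rw [h]

lemma fourier_orthogonal {d : ℕ} (hd : 0 < d) (c c' : Fin d) :
    ∑ i, fourierMat d c i * star (fourierMat d c' i) = if c = c' then 1 else 0 := by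
  have hd0 : (d : ℂ) ≠ 0 := Nat.cast_ne_zero.mpr hd.ne'
  have hsq : ((Real.sqrt d : ℝ) : ℂ) * ((Real.sqrt d : ℝ) : ℂ) = (d : ℂ) := by
    rw [← Complex.ofReal_mul, Real.mul_self_sqrt (Nat.cast_nonneg d)]
    push_cast
    ring
  set mz : ℤ := ((c : ℕ) : ℤ) - ((c' : ℕ) : ℤ) with hmz
  set ω : ℂ := Complex.exp (2 * (Real.pi : ℂ) * Complex.I * ((mz : ℤ) : ℂ) / (d : ℂ)) with hω
  have hterm : ∀ i : Fin d, fourierMat d c i * star (fourierMat d c' i) = ω ^ (i : ℕ) / d := by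
    intro i
    simp only [fourierMat, Matrix.of_apply, Complex.star_def, map_div₀, Complex.conj_ofReal]
    rw [← Complex.exp_conj]
    have hconjA : (starRingEnd ℂ) (2 * (Real.pi : ℂ) * Complex.I * ((c' : ℕ) : ℂ)
        * ((i : ℕ) : ℂ) / (d : ℂ))
        = -(2 * (Real.pi : ℂ) * Complex.I * ((c' : ℕ) : ℂ) * ((i : ℕ) : ℂ) / (d : ℂ)) := by
      simp [map_div₀, _root_.map_mul, Complex.conj_I, Complex.conj_ofReal, map_ofNat,
        Complex.conj_natCast]
      ring
    rw [hconjA, div_mul_div_comm, ← Complex.exp_add, hsq]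
    have harg : 2 * (Real.pi : ℂ) * Complex.I * ((c : ℕ) : ℂ) * ((i : ℕ) : ℂ) / (d : ℂ)
        + -(2 * (Real.pi : ℂ) * Complex.I * ((c' : ℕ) : ℂ) * ((i : ℕ) : ℂ) / (d : ℂ))
        = ((i : ℕ) : ℂ) * (2 * (Real.pi : ℂ) * Complex.I * ((mz : ℤ) : ℂ) / (d : ℂ)) := by
      rw [hmz]
      push_cast
      ring
    rw [harg, Complex.exp_nat_mul]
  have hsum : ∑ i : Fin d, ω ^ (i : ℕ) = if c = c' then (d : ℂ) else 0 := by
    rw [Fin.sum_univ_eq_sum_range (fun k => ω ^ k) d]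
    by_cases h : c = c'
    · have hm0 : mz = 0 := by rw [hmz, h]; ring
      have hω1 : ω = 1 := by rw [hω, hm0]; simp
      simp [hω1, h]
    · have hcc : (c : ℕ) ≠ (c' : ℕ) := fun hh => h (Fin.ext hh)
      have hd' : (0 : ℤ) < (d : ℤ) := by exact_mod_cast hd
      have hc1 := c.isLt
      have hc2 := c'.isLt
      have hmznez : mz ≠ 0 := by omega
      have hmlt : mz < d := by omega
      have hmgt : -(d : ℤ) < mz := by omega
      have hne : (2 * (Real.pi : ℂ) * Complex.I) ≠ 0 := by
        simp [Real.pi_ne_zero, Complex.I_ne_zero, Complex.ofReal_ne_zero]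
      have hω1 : ω ≠ 1 := by
        intro hcon
        rw [hω, Complex.exp_eq_one_iff] at hcon
        obtain ⟨k, hk⟩ := hcon
        have h2 : 2 * (Real.pi : ℂ) * Complex.I * (((mz : ℤ) : ℂ) / (d : ℂ))
            = 2 * (Real.pi : ℂ) * Complex.I * ((k : ℤ) : ℂ) := by
          rw [← mul_div_assoc, hk]
          ring
        have h4 := mul_left_cancel₀ hne h2
        rw [div_eq_iff hd0] at h4
        have h5 : mz = k * d := by exact_mod_cast h4
        rcases lt_trichotomy k 0 with h0 | h0 | h0
        · have : mz ≤ -(d : ℤ) := by nlinarith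
          omega
        · rw [h0] at h5; simp at h5; exact hmznez h5
        · have : (d : ℤ) ≤ mz := by nlinarith
          omega
      have hωd : ω ^ d = 1 := by
        rw [hω, ← Complex.exp_nat_mul]
        have harg2 : (d : ℂ) * (2 * (Real.pi : ℂ) * Complex.I * ((mz : ℤ) : ℂ) / (d : ℂ))
            = ((mz : ℤ) : ℂ) * (2 * (Real.pi : ℂ) * Complex.I) := by
          field_simp
        rw [harg2]
        exact Complex.exp_int_mul_two_pi_mul_I mz
      rw [geom_sum_eq hω1, hωd]
      simp [h]
  rw [Finset.sum_congr rfl fun i _ => hterm i, ← Finset.sum_div, hsum]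
  by_cases h : c = c' <;> simp [h, hd0]

lemma one_orthogonal {d : ℕ} (c c' : Fin d) :
    ∑ i, (1 : Matrix (Fin d) (Fin d) ℂ) c i * star ((1 : Matrix (Fin d) (Fin d) ℂ) c' i)
      = if c = c' then 1 else 0 := by
  by_cases h : c = c'
  · subst h
    rw [if_pos rfl, Finset.sum_eq_single c]
    · simp [Matrix.one_apply]
    · intro b _ hb
      simp [Matrix.one_apply_ne (fun hh : c = b => hb hh.symm)]
    · intro hc; exact absurd (Finset.mem_univ c) hc
  · rw [if_neg h]
    apply Finset.sum_eq_zero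
    intro i _
    rcases eq_or_ne c i with rfl | hci
    · simp [Matrix.one_apply_ne (fun hh : c' = c => h hh.symm)]
    · simp [Matrix.one_apply_ne hci]

end Fourier

section Colv

/-- The `i`-th column of `U_j`, as indexed by `k = (i, j)`. -/
def colv (d : ℕ) (k : Fin d × Fin 2) : Fin d → ℂ :=
  fun c => (if k.2 = 0 then (1 : Matrix (Fin d) (Fin d) ℂ) else fourierMat d) c k.1

lemma colv_zero (d : ℕ) (i : Fin d) : colv d (i, 0) = basisVec i := by
  funext c
  simp [colv, basisVec, Matrix.one_apply]

lemma colv_one (d : ℕ) (i : Fin d) : colv d (i, 1) = fun a => fourierMat d a i := by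
  funext c
  simp [colv]

lemma colv_orthosum {d : ℕ} (hd : 0 < d) (c c' : Fin d) :
    ∑ p : Fin d × Fin 2, colv d p c * star (colv d p c') = if c = c' then 2 else 0 := by
  rw [Fintype.sum_prod_type, Finset.sum_comm, Fin.sum_univ_two]
  have h0 : ∀ i : Fin d, colv d (i, 0) c * star (colv d (i, 0) c')
      = (1 : Matrix (Fin d) (Fin d) ℂ) c i * star ((1 : Matrix (Fin d) (Fin d) ℂ) c' i) := by
    intro i; simp [colv]
  have h1 : ∀ i : Fin d, colv d (i, 1) c * star (colv d (i, 1) c')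
      = fourierMat d c i * star (fourierMat d c' i) := by
    intro i; simp [colv]
  rw [Finset.sum_congr rfl fun i _ => h0 i, Finset.sum_congr rfl fun i _ => h1 i,
    one_orthogonal, fourier_orthogonal hd]
  by_cases h : c = c' <;> simp [h]
  norm_num

lemma colv_orthosum' {d : ℕ} (hd : 0 < d) (c c' : Fin d) :
    ∑ p : Fin d × Fin 2, star (colv d p c) * colv d p c' = if c = c' then 2 else 0 := by
  calc ∑ p : Fin d × Fin 2, star (colv d p c) * colv d p c'
      = star (∑ p : Fin d × Fin 2, colv d p c * star (colv d p c')) := by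
        rw [star_sum]
        exact Finset.sum_congr rfl fun p _ => by rw [star_mul', star_star]
    _ = _ := by rw [colv_orthosum hd c c']; by_cases h : c = c' <;> simp [h]

lemma colv_normsum {d : ℕ} (hd : 0 < d) (k : Fin d × Fin 2) :
    ∑ i, colv d k i * star (colv d k i) = 1 := by
  rcases k with ⟨i, j⟩
  by_cases hj : j = 0
  · subst hj
    have h : ∀ c : Fin d, colv d (i, 0) c * star (colv d (i, 0) c)
        = (1 : Matrix (Fin d) (Fin d) ℂ) i c * star ((1 : Matrix (Fin d) (Fin d) ℂ) i c) := by
      intro c; simp [colv, Matrix.one_apply, eq_comm]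
    rw [Finset.sum_congr rfl fun c _ => h c, one_orthogonal i i]
    simp
  · have hj1 : j = 1 := by
      omega
    subst hj1
    have h : ∀ c : Fin d, colv d (i, 1) c * star (colv d (i, 1) c)
        = fourierMat d i c * star (fourierMat d i c) := by
      intro c; simp [colv, fourier_symm d c i]
    rw [Finset.sum_congr rfl fun c _ => h c, fourier_orthogonal hd i i]
    simp

lemma sum_ketbra_basis (d : ℕ) :
    ∑ i : Fin d, ketbra (basisVec i) = (1 : Matrix (Fin d) (Fin d) ℂ) := by
  ext a b
  rw [Matrix.sum_apply]
  have h : ∀ i : Fin d, ketbra (basisVec i) a b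
      = (1 : Matrix (Fin d) (Fin d) ℂ) a i * star ((1 : Matrix (Fin d) (Fin d) ℂ) b i) := by
    intro i; simp [ketbra, basisVec, Matrix.one_apply]
  rw [Finset.sum_congr rfl fun i _ => h i, one_orthogonal a b, Matrix.one_apply]

lemma sum_ketbra_fourier {d : ℕ} (hd : 0 < d) :
    ∑ i : Fin d, ketbra (fun a => fourierMat d a i) = (1 : Matrix (Fin d) (Fin d) ℂ) := by
  ext a b
  rw [Matrix.sum_apply]
  have h : ∀ i : Fin d, ketbra (fun a => fourierMat d a i) a b
      = fourierMat d a i * star (fourierMat d b i) := by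
    intro i; simp [ketbra]
  rw [Finset.sum_congr rfl fun i _ => h i, fourier_orthogonal hd a b, Matrix.one_apply]

end Colv
section Flower

lemma scal_mul_scal (d : ℕ) :
    ((Real.sqrt (2 * (d : ℝ)) : ℝ) : ℂ)⁻¹ * star (((Real.sqrt (2 * (d : ℝ)) : ℝ) : ℂ)⁻¹)
      = (2 * (d : ℂ))⁻¹ := by
  rw [Complex.star_def, map_inv₀, Complex.conj_ofReal, ← mul_inv, ← Complex.ofReal_mul,
    Real.mul_self_sqrt (by positivity)]
  push_cast
  ring

lemma scal_rearrange (d : ℕ) (z w : ℂ) :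
    ((Real.sqrt (2 * (d : ℝ)) : ℝ) : ℂ)⁻¹ * z
        * (star (((Real.sqrt (2 * (d : ℝ)) : ℝ) : ℂ)⁻¹) * w)
      = (2 * (d : ℂ))⁻¹ * (z * w) := by
  calc ((Real.sqrt (2 * (d : ℝ)) : ℝ) : ℂ)⁻¹ * z
        * (star (((Real.sqrt (2 * (d : ℝ)) : ℝ) : ℂ)⁻¹) * w)
      = (((Real.sqrt (2 * (d : ℝ)) : ℝ) : ℂ)⁻¹
          * star (((Real.sqrt (2 * (d : ℝ)) : ℝ) : ℂ)⁻¹)) * (z * w) := by ring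
    _ = _ := by rw [scal_mul_scal]

lemma flowerKet_eq (d : ℕ) (a : (Fin d × Fin 2) × (Fin d × Fin 2)) (c : Fin d) :
    flowerKet d (a, c) = ((Real.sqrt (2 * (d : ℝ)) : ℝ) : ℂ)⁻¹
      * (if a.1 = a.2 then colv d a.1 c else 0) := by
  simp only [flowerKet, colv]
  congr 1
  by_cases h : a.1.1 = a.2.1 ∧ a.1.2 = a.2.2
  · rw [if_pos h, if_pos (Prod.ext_iff.mpr h)]
  · rw [if_neg h, if_neg (fun hh => h (Prod.ext_iff.mp hh))]

lemma flowerKet_swap (d : ℕ) (p q : Fin d × Fin 2) (c : Fin d) :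
    flowerKet d ((p, q), c) = flowerKet d ((q, p), c) := by
  rw [flowerKet_eq, flowerKet_eq]
  by_cases h : p = q
  · subst h; rfl
  · rw [if_neg h, if_neg (fun hh : q = p => h hh.symm)]

lemma trace_ketbra_colv {d : ℕ} (hd : 0 < d) (k : Fin d × Fin 2) :
    (ketbra (colv d k)).trace = 1 := by
  rw [Matrix.trace]
  have h : ∀ i : Fin d, (ketbra (colv d k)).diag i = colv d k i * star (colv d k i) := by
    intro i; simp [ketbra, Matrix.diag_apply]
  rw [Finset.sum_congr rfl fun i _ => h i, colv_normsum hd k]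

lemma margAE_eq {E : Type*} [Fintype E] [DecidableEq E] {d : ℕ} (Λ : CPTPMap (Fin d) E) :
    margAE (idTensor Λ (flowerPure d))
      = blockMat (fun k => Λ.toFun ((2 * (d : ℂ))⁻¹ • ketbra (colv d k))) := by
  ext x y
  simp only [margAE, idTensor, Matrix.of_apply, blockMat]
  have hblk : ∀ b : Fin d × Fin 2,
      (Matrix.of fun c c' => flowerPure d (((x.1, b), c)) (((y.1, b), c')))
        = if b = x.1 ∧ b = y.1 then (2 * (d : ℂ))⁻¹ • ketbra (colv d x.1) else 0 := by
    intro b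
    by_cases hb : b = x.1 ∧ b = y.1
    · obtain ⟨hb1, hb2⟩ := hb
      rw [if_pos ⟨hb1, hb2⟩]
      ext c c'
      show flowerKet d ((x.1, b), c) * star (flowerKet d ((y.1, b), c')) = _
      rw [flowerKet_eq, flowerKet_eq]
      simp only [if_pos hb1.symm, if_pos hb2.symm]
      have hxy : y.1 = x.1 := hb2.symm.trans hb1
      rw [hxy]
      rw [star_mul']
      simp only [Matrix.smul_apply, ketbra, Matrix.of_apply, smul_eq_mul]
      rw [scal_rearrange]
    · rw [if_neg hb]
      ext c c'
      show flowerKet d ((x.1, b), c) * star (flowerKet d ((y.1, b), c')) = 0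
      rcases not_and_or.mp hb with h | h
      · rw [flowerKet_eq, if_neg (fun hh : x.1 = b => h hh.symm)]
        simp
      · rw [flowerKet_eq d ((y.1, b)) c', if_neg (fun hh : y.1 = b => h hh.symm)]
        simp
  calc ∑ b : Fin d × Fin 2, Λ.toFun
        (Matrix.of fun c c' => flowerPure d (((x.1, b), c)) (((y.1, b), c'))) x.2 y.2
      = ∑ b : Fin d × Fin 2, (if b = x.1 ∧ b = y.1
          then Λ.toFun ((2 * (d : ℂ))⁻¹ • ketbra (colv d x.1)) x.2 y.2 else 0) := by
        apply Finset.sum_congr rfl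
        intro b _
        rw [hblk b]
        by_cases hb : b = x.1 ∧ b = y.1
        · rw [if_pos hb, if_pos hb]
        · rw [if_neg hb, if_neg hb, Λ.lin.map_zero, Matrix.zero_apply]
    _ = _ := by
        by_cases hxy : x.1 = y.1
        · rw [if_pos hxy]
          have hiff : ∀ b : Fin d × Fin 2, (b = x.1 ∧ b = y.1) ↔ (b = x.1) :=
            fun b => ⟨fun h => h.1, fun h => ⟨h, h.trans hxy⟩⟩
          rw [Finset.sum_congr rfl fun b _ => if_congr (hiff b) rfl rfl]
          rw [Finset.sum_ite_eq' Finset.univ x.1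
            (fun _ => Λ.toFun ((2 * (d : ℂ))⁻¹ • ketbra (colv d x.1)) x.2 y.2)]
          simp
        · rw [if_neg hxy]
          apply Finset.sum_eq_zero
          intro b _
          exact if_neg (fun hh => hxy (hh.1.symm.trans hh.2))

lemma margBE_eq_margAE {E : Type*} [Fintype E] [DecidableEq E] {d : ℕ} (Λ : CPTPMap (Fin d) E) :
    margBE (idTensor Λ (flowerPure d)) = margAE (idTensor Λ (flowerPure d)) := by
  ext x y
  simp only [margBE, margAE, idTensor, Matrix.of_apply]
  apply Finset.sum_congr rfl
  intro a _
  congr 1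
  ext c c'
  show flowerKet d ((a, x.1), c) * star (flowerKet d ((a, y.1), c'))
    = flowerKet d ((x.1, a), c) * star (flowerKet d ((y.1, a), c'))
  rw [flowerKet_swap d a x.1 c, flowerKet_swap d a y.1 c']

lemma ptraceL_eq {E : Type*} [Fintype E] [DecidableEq E] {d : ℕ} (hd : 0 < d)
    (Λ : CPTPMap (Fin d) E) :
    ptraceL (idTensor Λ (flowerPure d)) = Λ.toFun (mmix (Fin d)) := by
  have hsum : ∑ a : (Fin d × Fin 2) × (Fin d × Fin 2),
      (Matrix.of fun c c' => flowerPure d ((a, c)) ((a, c'))) = mmix (Fin d) := by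
    ext c c'
    rw [Matrix.sum_apply]
    have h1 : ∀ a : (Fin d × Fin 2) × (Fin d × Fin 2),
        (Matrix.of fun c c' => flowerPure d ((a, c)) ((a, c'))) c c'
          = if a.2 = a.1 then (2 * (d : ℂ))⁻¹ * (colv d a.1 c * star (colv d a.1 c')) else 0 := by
      intro a
      show flowerKet d (a, c) * star (flowerKet d (a, c')) = _
      rw [flowerKet_eq, flowerKet_eq]
      by_cases h : a.1 = a.2
      · simp only [if_pos h]
        rw [if_pos h.symm, star_mul', scal_rearrange]
      · rw [if_neg h, if_neg (fun hh : a.2 = a.1 => h hh.symm)]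
        simp
    rw [Finset.sum_congr rfl fun a _ => h1 a, Fintype.sum_prod_type]
    simp only [Finset.sum_ite_eq', Finset.mem_univ, if_true]
    rw [← Finset.mul_sum, colv_orthosum hd c c']
    simp only [mmix, Matrix.smul_apply, Matrix.one_apply, Fintype.card_fin, smul_eq_mul]
    by_cases h : c = c'
    · rw [if_pos h, if_pos h, mul_one]
      rw [mul_inv]
      have h2 : (2 : ℂ)⁻¹ * (2 : ℂ) = 1 := by norm_num
      calc (2 : ℂ)⁻¹ * (d : ℂ)⁻¹ * 2 = ((2 : ℂ)⁻¹ * 2) * (d : ℂ)⁻¹ := by ring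
        _ = (d : ℂ)⁻¹ := by rw [h2, one_mul]
    · rw [if_neg h, if_neg h, mul_zero, mul_zero]
  ext b b'
  simp only [ptraceL, idTensor, Matrix.of_apply]
  rw [← Matrix.sum_apply b b' Finset.univ
    (fun a => Λ.toFun (Matrix.of fun c c' => flowerPure d ((a, c)) ((a, c'))))]
  have hlin : (∑ a : (Fin d × Fin 2) × (Fin d × Fin 2),
      Λ.toFun (Matrix.of fun c c' => flowerPure d ((a, c)) ((a, c'))))
      = Λ.toFun (∑ a : (Fin d × Fin 2) × (Fin d × Fin 2),
          (Matrix.of fun c c' => flowerPure d ((a, c)) ((a, c')))) :=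
    (map_sum (IsLinearMap.mk' Λ.toFun Λ.lin) _ Finset.univ).symm
  rw [hlin, hsum]

lemma mmix_isHermitian (d : ℕ) : (mmix (Fin d)).IsHermitian := by
  unfold Matrix.IsHermitian mmix
  rw [Matrix.conjTranspose_smul, Matrix.conjTranspose_one]
  congr 1
  simp

lemma vnEntropy_mmix {d : ℕ} (hd : 0 < d) : vnEntropy (mmix (Fin d)) = Real.logb 2 d := by
  have h1 : mmix (Fin d) = (1 : Matrix (Fin d) (Fin d) ℂ)
      * Matrix.diagonal (fun _ : Fin d => (((d : ℝ)⁻¹ : ℝ) : ℂ))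
      * star (1 : Matrix (Fin d) (Fin d) ℂ) := by
    ext i j
    by_cases h : i = j
    · subst h
      simp [mmix, Matrix.one_apply]
    · simp [mmix, Matrix.diagonal_apply_ne _ h, Matrix.one_apply_ne h, h]
  have hcp : (mmix (Fin d)).charpoly
      = ∏ _i : Fin d, (Polynomial.X - Polynomial.C ((((d : ℝ)⁻¹ : ℝ)) : ℂ)) := by
    conv_lhs => rw [h1]
    exact charpoly_conj_diag 1 (by simp) _
  rw [vnEntropy_eq_sum (mmix_isHermitian d) _ hcp]
  rw [Finset.sum_const, Finset.card_univ, Fintype.card_fin, nsmul_eq_mul]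
  rw [nlog, Real.logb_inv]
  have hdR : (d : ℝ) ≠ 0 := Nat.cast_ne_zero.mpr hd.ne'
  field_simp

end Flower
section Isometry

/-- The isometry embedding `ℂ^d` into `AA'BB'` underlying the flower purification. -/
def Vb (d : ℕ) : Matrix ((Fin d × Fin 2) × (Fin d × Fin 2)) (Fin d) ℂ :=
  Matrix.of fun p c => ((Real.sqrt 2 : ℝ) : ℂ)⁻¹ * (if p.1 = p.2 then colv d p.1 c else 0)

lemma s2_star_mul (z w : ℂ) :
    star (((Real.sqrt 2 : ℝ) : ℂ)⁻¹ * z) * (((Real.sqrt 2 : ℝ) : ℂ)⁻¹ * w)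
      = (2 : ℂ)⁻¹ * (star z * w) := by
  have hs : star (((Real.sqrt 2 : ℝ) : ℂ)⁻¹) = ((Real.sqrt 2 : ℝ) : ℂ)⁻¹ := by
    rw [Complex.star_def, map_inv₀, Complex.conj_ofReal]
  have h2 : ((Real.sqrt 2 : ℝ) : ℂ)⁻¹ * ((Real.sqrt 2 : ℝ) : ℂ)⁻¹ = (2 : ℂ)⁻¹ := by
    rw [← mul_inv, ← Complex.ofReal_mul, Real.mul_self_sqrt (by norm_num)]
    norm_num
  calc star (((Real.sqrt 2 : ℝ) : ℂ)⁻¹ * z) * (((Real.sqrt 2 : ℝ) : ℂ)⁻¹ * w)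
      = star (((Real.sqrt 2 : ℝ) : ℂ)⁻¹) * star z * (((Real.sqrt 2 : ℝ) : ℂ)⁻¹ * w) := by
        rw [star_mul']
    _ = (star (((Real.sqrt 2 : ℝ) : ℂ)⁻¹) * ((Real.sqrt 2 : ℝ) : ℂ)⁻¹) * (star z * w) := by
        ring
    _ = (((Real.sqrt 2 : ℝ) : ℂ)⁻¹ * ((Real.sqrt 2 : ℝ) : ℂ)⁻¹) * (star z * w) := by
        rw [hs]
    _ = _ := by rw [h2]

lemma flowerKet_Vb {d : ℕ} (a : (Fin d × Fin 2) × (Fin d × Fin 2)) (c : Fin d) :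
    flowerKet d (a, c) = ((Real.sqrt d : ℝ) : ℂ)⁻¹ * Vb d a c := by
  rw [flowerKet_eq]
  simp only [Vb, Matrix.of_apply]
  rw [← mul_assoc]
  congr 1
  rw [show Real.sqrt (2 * (d : ℝ)) = Real.sqrt 2 * Real.sqrt (d : ℝ) from
    Real.sqrt_mul (by norm_num) _]
  rw [Complex.ofReal_mul, mul_inv]
  ring

lemma VbVb {d : ℕ} (hd : 0 < d) (c c' : Fin d) :
    ∑ p : (Fin d × Fin 2) × (Fin d × Fin 2), star (Vb d p c) * Vb d p c'
      = if c = c' then 1 else 0 := by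
  have h1 : ∀ p : (Fin d × Fin 2) × (Fin d × Fin 2), star (Vb d p c) * Vb d p c'
      = if p.2 = p.1 then (2 : ℂ)⁻¹ * (star (colv d p.1 c) * colv d p.1 c') else 0 := by
    intro p
    simp only [Vb, Matrix.of_apply]
    by_cases h : p.1 = p.2
    · simp only [if_pos h, if_pos h.symm]
      exact s2_star_mul _ _
    · simp only [if_neg h, if_neg (fun hh : p.2 = p.1 => h hh.symm)]
      simp
  rw [Finset.sum_congr rfl fun p _ => h1 p, Fintype.sum_prod_type]
  simp only [Finset.sum_ite_eq', Finset.mem_univ, if_true]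
  rw [← Finset.mul_sum, colv_orthosum' hd c c']
  by_cases h : c = c'
  · rw [if_pos h, if_pos h]; norm_num
  · rw [if_neg h, if_neg h, mul_zero]

/-- `Vb ⊗ 1` as a matrix. -/
def Vt (d : ℕ) (E : Type*) [DecidableEq E] :
    Matrix (((Fin d × Fin 2) × (Fin d × Fin 2)) × E) (Fin d × E) ℂ :=
  Matrix.of fun x y => Vb d x.1 y.1 * (if x.2 = y.2 then 1 else 0)

lemma VtV {d : ℕ} {E : Type*} [Fintype E] [DecidableEq E] (hd : 0 < d) :
    (Vt d E)ᴴ * Vt d E = 1 := by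
  ext x y
  rw [Matrix.mul_apply]
  have h1 : ∀ z : ((Fin d × Fin 2) × (Fin d × Fin 2)) × E,
      (Vt d E)ᴴ x z * Vt d E z y
        = (star (Vb d z.1 x.1) * Vb d z.1 y.1)
          * ((if z.2 = x.2 then (1 : ℂ) else 0) * (if z.2 = y.2 then (1 : ℂ) else 0)) := by
    intro z
    rw [Matrix.conjTranspose_apply]
    simp only [Vt, Matrix.of_apply, star_mul']
    by_cases hz1 : z.2 = x.2 <;> by_cases hz2 : z.2 = y.2 <;> simp [hz1, hz2] <;> ring_nf
  rw [Finset.sum_congr rfl fun z _ => h1 z, Fintype.sum_prod_type]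
  have h2 : ∀ p : (Fin d × Fin 2) × (Fin d × Fin 2),
      (∑ f : E, (star (Vb d p x.1) * Vb d p y.1)
          * ((if f = x.2 then (1 : ℂ) else 0) * (if f = y.2 then (1 : ℂ) else 0)))
        = (star (Vb d p x.1) * Vb d p y.1) * (if x.2 = y.2 then 1 else 0) := by
    intro p
    rw [← Finset.mul_sum]
    congr 1
    by_cases h : x.2 = y.2
    · rw [if_pos h, ← h]
      have hsimp : ∀ f : E, (if f = x.2 then (1 : ℂ) else 0) * (if f = x.2 then (1 : ℂ) else 0)
          = if f = x.2 then (1 : ℂ) else 0 := by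
        intro f; by_cases hf : f = x.2 <;> simp [hf]
      rw [Finset.sum_congr rfl fun f _ => hsimp f]
      rw [Finset.sum_ite_eq' Finset.univ x.2 (fun _ => (1 : ℂ))]
      simp
    · rw [if_neg h]
      apply Finset.sum_eq_zero
      intro f _
      by_cases hf1 : f = x.2
      · have hf2 : ¬ f = y.2 := fun hf2 => h (hf1.symm.trans hf2)
        rw [if_neg hf2]
        ring
      · rw [if_neg hf1]
        ring
  rw [Finset.sum_congr rfl fun p _ => h2 p, ← Finset.sum_mul, VbVb hd x.1 y.1,
    Matrix.one_apply]
  by_cases h1 : x.1 = y.1 <;> by_cases h2 : x.2 = y.2 <;>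
    simp [h1, h2, Prod.ext_iff]

lemma flower_conj {d : ℕ} {E : Type*} [Fintype E] [DecidableEq E]
    (Λ : CPTPMap (Fin d) E) :
    idTensor Λ (flowerPure d) = Vt d E * idTensor Λ (maxEnt (Fin d)) * (Vt d E)ᴴ := by
  set W := idTensor Λ (maxEnt (Fin d)) with hW
  ext x y
  rcases x with ⟨p, e⟩
  rcases y with ⟨q, e'⟩
  have hstep1 : ∀ z, (Vt d E * W) ((p, e)) z = ∑ c : Fin d, Vb d p c * W ((c, e)) z := by
    intro z
    rw [Matrix.mul_apply, Fintype.sum_prod_type]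
    apply Finset.sum_congr rfl
    intro c _
    rw [Finset.sum_eq_single e (fun f _ hf => by
        simp only [Vt, Matrix.of_apply]
        rw [if_neg (fun hh : e = f => hf hh.symm), mul_zero, zero_mul])
      (fun he => absurd (Finset.mem_univ e) he)]
    simp [Vt]
  have hstep2 : (Vt d E * W * (Vt d E)ᴴ) ((p, e)) ((q, e'))
      = ∑ c' : Fin d, (∑ c : Fin d, Vb d p c * W ((c, e)) ((c', e'))) * star (Vb d q c') := by
    rw [Matrix.mul_apply, Fintype.sum_prod_type]
    apply Finset.sum_congr rfl
    intro c' _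
    rw [Finset.sum_eq_single e' (fun f _ hf => by
        rw [Matrix.conjTranspose_apply]
        simp only [Vt, Matrix.of_apply]
        rw [if_neg (fun hh : e' = f => hf hh.symm), mul_zero, star_zero, mul_zero])
      (fun he => absurd (Finset.mem_univ e') he)]
    rw [Matrix.conjTranspose_apply, hstep1 ((c', e'))]
    congr 1
    show star (Vt d E ((q, e')) ((c', e'))) = star (Vb d q c')
    simp [Vt]
  have hsd : ((Real.sqrt d : ℝ) : ℂ)⁻¹ * ((Real.sqrt d : ℝ) : ℂ)⁻¹ = ((d : ℕ) : ℂ)⁻¹ := by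
    rw [← mul_inv, ← Complex.ofReal_mul, Real.mul_self_sqrt (Nat.cast_nonneg d)]
    push_cast
    ring
  have hmat : (Matrix.of fun c0 c0' => flowerPure d (((p, c0))) (((q, c0'))))
      = ∑ c' : Fin d, ∑ c : Fin d, (Vb d p c * star (Vb d q c'))
          • (Matrix.of fun a a' => maxEnt (Fin d) (((c, a))) (((c', a')))) := by
    ext a a'
    rw [Matrix.sum_apply]
    have hent : ∀ c' c : Fin d, ((Vb d p c * star (Vb d q c'))
        • (Matrix.of fun a a' => maxEnt (Fin d) (((c, a))) (((c', a'))))) a a'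
        = (if c = a then Vb d p c
            * (if c' = a' then star (Vb d q c') * ((d : ℕ) : ℂ)⁻¹ else 0) else 0) := by
      intro c' c
      simp only [Matrix.smul_apply, Matrix.of_apply, maxEnt, Fintype.card_fin, smul_eq_mul]
      by_cases h1 : c = a <;> by_cases h2 : c' = a' <;> simp [h1, h2] <;> ring
    have hR : ∀ c' : Fin d, ((∑ c : Fin d, (Vb d p c * star (Vb d q c'))
        • (Matrix.of fun a a' => maxEnt (Fin d) (((c, a))) (((c', a'))))) a a')
        = Vb d p a * (if c' = a' then star (Vb d q c') * ((d : ℕ) : ℂ)⁻¹ else 0) := by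
      intro c'
      rw [Matrix.sum_apply]
      rw [Finset.sum_congr rfl fun c _ => hent c' c]
      rw [Finset.sum_ite_eq' Finset.univ a
        (fun c => Vb d p c * (if c' = a' then star (Vb d q c') * ((d : ℕ) : ℂ)⁻¹ else 0))]
      simp
    rw [Finset.sum_congr rfl fun c' _ => hR c']
    rw [← Finset.mul_sum, Finset.sum_ite_eq' Finset.univ a'
      (fun c' => star (Vb d q c') * ((d : ℕ) : ℂ)⁻¹)]
    simp only [Finset.mem_univ, if_true]
    show flowerKet d ((p, a)) * star (flowerKet d ((q, a'))) = _
    rw [flowerKet_Vb, flowerKet_Vb, star_mul', Complex.star_def, map_inv₀, Complex.conj_ofReal]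
    calc ((Real.sqrt d : ℝ) : ℂ)⁻¹ * Vb d p a
          * (((Real.sqrt d : ℝ) : ℂ)⁻¹ * star (Vb d q a'))
        = (((Real.sqrt d : ℝ) : ℂ)⁻¹ * ((Real.sqrt d : ℝ) : ℂ)⁻¹)
            * (Vb d p a * star (Vb d q a')) := by ring
      _ = _ := by rw [hsd, Complex.star_def]; ring
  have hlin : Λ.toFun (∑ c' : Fin d, ∑ c : Fin d, (Vb d p c * star (Vb d q c'))
      • (Matrix.of fun a a' => maxEnt (Fin d) (((c, a))) (((c', a')))))
      = ∑ c' : Fin d, ∑ c : Fin d, (Vb d p c * star (Vb d q c'))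
          • Λ.toFun (Matrix.of fun a a' => maxEnt (Fin d) (((c, a))) (((c', a')))) := by
    refine (map_sum (IsLinearMap.mk' Λ.toFun Λ.lin) _ Finset.univ).trans ?_
    refine Finset.sum_congr rfl fun c' _ => ?_
    refine (map_sum (IsLinearMap.mk' Λ.toFun Λ.lin) _ Finset.univ).trans ?_
    exact Finset.sum_congr rfl fun c _ => (IsLinearMap.mk' Λ.toFun Λ.lin).map_smul _ _
  show Λ.toFun (Matrix.of fun c0 c0' => flowerPure d (((p, c0))) (((q, c0')))) e e' = _
  rw [hmat, hlin, hstep2, Matrix.sum_apply]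
  apply Finset.sum_congr rfl
  intro c' _
  rw [Matrix.sum_apply, Finset.sum_mul]
  apply Finset.sum_congr rfl
  intro c _
  simp only [Matrix.smul_apply, smul_eq_mul]
  rw [show W (((c, e))) (((c', e')))
    = Λ.toFun (Matrix.of fun a a' => maxEnt (Fin d) (((c, a))) (((c', a')))) e e' from rfl]
  ring

end Isometry
/-- entropies of the extension of the flower state obtained by
applying a channel `Λ` to the purifying system `C`. -/
theorem statement18 {E : Type*} [Fintype E] [DecidableEq E] (d : ℕ) (hd : 0 < d)
    (Λ : CPTPMap (Fin d) E) :
    vnEntropy (margAE (idTensor Λ (flowerPure d))) =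
      1 + vnEntropy (mmix (Fin d)) + vnEntropy (Λ.toFun (mmix (Fin d))) -
        (1 / 2) * holevoUnif (fun i : Fin d => Λ.toFun (ketbra (basisVec i))) -
        (1 / 2) * holevoUnif (fun i : Fin d =>
          Λ.toFun (ketbra (fun a => fourierMat d a i))) ∧
    vnEntropy (margBE (idTensor Λ (flowerPure d))) =
      vnEntropy (margAE (idTensor Λ (flowerPure d))) ∧
    vnEntropy (ptraceL (idTensor Λ (flowerPure d))) =
      vnEntropy (Λ.toFun (mmix (Fin d))) ∧
    vnEntropy (idTensor Λ (flowerPure d)) =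
      vnEntropy (idTensor Λ (maxEnt (Fin d))) := by
  have hdR : (d : ℝ) ≠ 0 := Nat.cast_ne_zero.mpr hd.ne'
  refine ⟨?_, ?_, ?_, ?_⟩
  · -- Part 1
    have hC : ((2 * (d : ℂ))⁻¹) = ((((2 * (d : ℝ))⁻¹ : ℝ)) : ℂ) := by push_cast; ring
    have hketpsd : ∀ k : Fin d × Fin 2, (Λ.toFun (ketbra (colv d k))).PosSemidef :=
      fun k => cptp_psd Λ (ketbra_posSemidef _)
    have hblkpsd : ∀ k : Fin d × Fin 2,
        (Λ.toFun ((2 * (d : ℂ))⁻¹ • ketbra (colv d k))).PosSemidef := by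
      intro k
      apply cptp_psd
      rw [hC]
      exact posSemidef_real_smul (ketbra_posSemidef _) (by positivity)
    have htr : ∀ k : Fin d × Fin 2, ((Λ.toFun (ketbra (colv d k))).trace).re = 1 := by
      intro k
      rw [Λ.tp, trace_ketbra_colv hd k]
      simp
    have hb : ∀ k : Fin d × Fin 2, vnEntropy (Λ.toFun ((2 * (d : ℂ))⁻¹ • ketbra (colv d k)))
        = (2 * (d : ℝ))⁻¹ * vnEntropy (Λ.toFun (ketbra (colv d k))) + nlog ((2 * (d : ℝ))⁻¹) := by
      intro k
      rw [hC, Λ.lin.map_smul]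
      rw [vnEntropy_smul (hketpsd k).1, htr k, mul_one]
    have hmarg : vnEntropy (margAE (idTensor Λ (flowerPure d)))
        = ∑ k : Fin d × Fin 2, vnEntropy (Λ.toFun ((2 * (d : ℂ))⁻¹ • ketbra (colv d k))) := by
      rw [margAE_eq Λ, vnEntropy_blockMat _ (fun k => (hblkpsd k).1)]
    have hens1 : ((Fintype.card (Fin d) : ℂ))⁻¹ • ∑ i, Λ.toFun (ketbra (basisVec i))
        = Λ.toFun (mmix (Fin d)) := by
      rw [show (∑ i : Fin d, Λ.toFun (ketbra (basisVec i)))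
          = Λ.toFun (∑ i : Fin d, ketbra (basisVec i)) from
        (map_sum (IsLinearMap.mk' Λ.toFun Λ.lin) _ _).symm]
      rw [sum_ketbra_basis d]
      rw [show ((Fintype.card (Fin d) : ℂ))⁻¹ • Λ.toFun 1
          = Λ.toFun (((Fintype.card (Fin d) : ℂ))⁻¹ • 1) from (Λ.lin.map_smul _ _).symm]
      rfl
    have hens2 : ((Fintype.card (Fin d) : ℂ))⁻¹
          • ∑ i, Λ.toFun (ketbra (fun a => fourierMat d a i))
        = Λ.toFun (mmix (Fin d)) := by
      rw [show (∑ i : Fin d, Λ.toFun (ketbra (fun a => fourierMat d a i)))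
          = Λ.toFun (∑ i : Fin d, ketbra (fun a => fourierMat d a i)) from
        (map_sum (IsLinearMap.mk' Λ.toFun Λ.lin) _ _).symm]
      rw [sum_ketbra_fourier hd]
      rw [show ((Fintype.card (Fin d) : ℂ))⁻¹ • Λ.toFun 1
          = Λ.toFun (((Fintype.card (Fin d) : ℂ))⁻¹ • 1) from (Λ.lin.map_smul _ _).symm]
      rfl
    have hhol1 : holevoUnif (fun i : Fin d => Λ.toFun (ketbra (basisVec i)))
        = vnEntropy (Λ.toFun (mmix (Fin d)))
          - (d : ℝ)⁻¹ * ∑ i, vnEntropy (Λ.toFun (ketbra (basisVec i))) := by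
      simp only [holevoUnif]
      rw [hens1]
      simp [Fintype.card_fin]
    have hhol2 : holevoUnif (fun i : Fin d => Λ.toFun (ketbra (fun a => fourierMat d a i)))
        = vnEntropy (Λ.toFun (mmix (Fin d)))
          - (d : ℝ)⁻¹ * ∑ i, vnEntropy (Λ.toFun (ketbra (fun a => fourierMat d a i))) := by
      simp only [holevoUnif]
      rw [hens2]
      simp [Fintype.card_fin]
    have hin : ∀ i : Fin d,
        (∑ j : Fin 2, ((2 * (d : ℝ))⁻¹ * vnEntropy (Λ.toFun (ketbra (colv d (i, j))))
          + nlog ((2 * (d : ℝ))⁻¹)))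
        = (2 * (d : ℝ))⁻¹ * (vnEntropy (Λ.toFun (ketbra (basisVec i)))
            + vnEntropy (Λ.toFun (ketbra (fun a => fourierMat d a i))))
          + 2 * nlog ((2 * (d : ℝ))⁻¹) := by
      intro i
      rw [Fin.sum_univ_two, colv_zero, colv_one]
      ring
    have hsplit : ∑ k : Fin d × Fin 2,
        vnEntropy (Λ.toFun ((2 * (d : ℂ))⁻¹ • ketbra (colv d k)))
        = (2 * (d : ℝ))⁻¹ * ((∑ i, vnEntropy (Λ.toFun (ketbra (basisVec i))))
            + (∑ i, vnEntropy (Λ.toFun (ketbra (fun a => fourierMat d a i)))))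
          + (2 * (d : ℝ)) * nlog ((2 * (d : ℝ))⁻¹) := by
      rw [Finset.sum_congr rfl fun k _ => hb k, Fintype.sum_prod_type]
      rw [Finset.sum_congr rfl fun i _ => hin i]
      rw [Finset.sum_add_distrib, Finset.sum_const, Finset.card_univ, Fintype.card_fin,
        nsmul_eq_mul, ← Finset.mul_sum, Finset.sum_add_distrib]
      ring
    have hlogterm : (2 * (d : ℝ)) * nlog ((2 * (d : ℝ))⁻¹) = 1 + Real.logb 2 d := by
      rw [nlog, Real.logb_inv, Real.logb_mul (by norm_num) hdR,
        Real.logb_self_eq_one (by norm_num)]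
      field_simp
    rw [hmarg, hsplit, hlogterm, vnEntropy_mmix hd, hhol1, hhol2]
    field_simp
    ring
  · -- Part 2
    rw [margBE_eq_margAE Λ]
  · -- Part 3
    rw [ptraceL_eq hd Λ]
  · -- Part 4
    have hpsdN : (idTensor Λ (maxEnt (Fin d))).PosSemidef := idTensor_psd Λ (maxEnt_psd (Fin d))
    have hpsdF : (idTensor Λ (flowerPure d)).PosSemidef := by
      show (idTensor Λ (ketbra (flowerKet d))).PosSemidef
      exact idTensor_psd Λ (ketbra_posSemidef _)
    have hcard : Fintype.card (Fin d × E)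
        ≤ Fintype.card ((((Fin d × Fin 2) × (Fin d × Fin 2))) × E) := by
      simp only [Fintype.card_prod, Fintype.card_fin]
      apply Nat.mul_le_mul_right
      nlinarith [hd]
    have hcp4 := charpoly_isometry (Vt d E) (VtV hd) (idTensor Λ (maxEnt (Fin d))) hcard
    rw [← flower_conj Λ] at hcp4
    set Δ := Fintype.card ((((Fin d × Fin 2) × (Fin d × Fin 2))) × E)
      - Fintype.card (Fin d × E) with hΔ
    have e2 : (idTensor Λ (flowerPure d)).charpoly
        = ∏ i : Fin Δ ⊕ (Fin d × E), (Polynomial.X - Polynomial.C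
            (((Sum.elim (fun _ => (0 : ℝ)) hpsdN.1.eigenvalues) i : ℝ) : ℂ)) := by
      rw [hcp4, hermitian_charpoly_eigen hpsdN.1, Fintype.prod_sum_type]
      congr 1
      have hx : ∀ i : Fin Δ, (Polynomial.X - Polynomial.C
          (((Sum.elim (fun _ => (0 : ℝ)) hpsdN.1.eigenvalues) (Sum.inl i) : ℝ) : ℂ))
          = Polynomial.X := by
        intro i; simp
      rw [Finset.prod_congr rfl fun i _ => hx i, Finset.prod_const, Finset.card_univ,
        Fintype.card_fin]
    rw [vnEntropy_eq_sum hpsdF.1 _ e2, Fintype.sum_sum_type]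
    have hzero : ∀ i : Fin Δ,
        nlog ((Sum.elim (fun _ => (0 : ℝ)) hpsdN.1.eigenvalues) (Sum.inl i)) = 0 := by
      intro i
      simp [nlog_zero]
    rw [Finset.sum_congr rfl fun i _ => hzero i, Finset.sum_const, smul_zero, zero_add]
    rw [vnEntropy, dif_pos hpsdN.1]
    apply Finset.sum_congr rfl
    intro i _
    simp

end
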